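/- Let χ be a Dirichlet character modulo N taking only real values. Then for every integer s ≥ 2, the value L(s,χ) of the Dirichlet L-function is a real number satisfying ζ(s)^{-1} ≤ L(s,χ) ≤ ζ(s), where ζ denotes the Riemann zeta function. -/

import Mathlib

open Complex in
/-- For a real Dirichlet character χ and an integer s ≥ 2, the L-value L(s,χ) is real and
satisfies ζ(s)⁻¹ ≤ L(s,χ) ≤ ζ(s). -/
theorem real_dirichlet_L_between_zeta_inv_and_zeta
    (N : ℕ) (χ : DirichletCharacter ℂ N) (hχ : ∀ n : ℕ, (χ (n : ZMod N)).im = 0)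
    (s : ℕ) (hs : 2 ≤ s) :
    (LSeries (fun n : ℕ => χ (n : ZMod N)) (s : ℂ)).im = 0 ∧
    ((riemannZeta (s : ℂ)).re)⁻¹ ≤ (LSeries (fun n : ℕ => χ (n : ZMod N)) (s : ℂ)).re ∧
    (LSeries (fun n : ℕ => χ (n : ZMod N)) (s : ℂ)).re ≤ (riemannZeta (s : ℂ)).re := by
  have hs1 : 1 < (s : ℂ).re := by
    rw [Complex.natCast_re]
    exact_mod_cast lt_of_lt_of_le one_lt_two (by exact_mod_cast hs)
  -- real-valued data
  set c : Nat.Primes → ℝ := fun p => (χ ((p : ℕ) : ZMod N)).re with hc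
  set x : Nat.Primes → ℝ := fun p => (((p : ℕ) : ℝ) ^ s)⁻¹ with hxdef
  have hx0 : ∀ p, 0 < x p := by
    intro p
    have : (0:ℝ) < ((p:ℕ):ℝ) := by exact_mod_cast p.2.pos
    positivity
  have hx1 : ∀ p, x p < 1 := by
    intro p
    have h2 : (1:ℝ) < ((p:ℕ):ℝ) := by exact_mod_cast p.2.one_lt
    have : (1:ℝ) < ((p:ℕ):ℝ) ^ s := one_lt_pow₀ h2 (by omega)
    exact inv_lt_one_of_one_lt₀ this
  have hc1 : ∀ p, |c p| ≤ 1 := by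
    intro p
    calc |c p| ≤ ‖χ ((p : ℕ) : ZMod N)‖ := Complex.abs_re_le_norm _
    _ ≤ 1 := χ.norm_le_one _
  -- positivity of factors
  have hpos : ∀ p, 0 < 1 - c p * x p := by
    intro p
    have : c p * x p ≤ |c p| * x p := mul_le_mul_of_nonneg_right (le_abs_self _) (hx0 p).le
    have h2 : |c p| * x p ≤ 1 * x p := mul_le_mul_of_nonneg_right (hc1 p) (hx0 p).le
    nlinarith [hx1 p]
  -- rewrite the complex Euler factors in real form
  have hχp : ∀ p : Nat.Primes, χ ((p : ℕ) : ZMod N) = ((c p : ℝ) : ℂ) := fun p =>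
    Complex.ext (by simp [hc]) (by simp [hχ])
  have hpx : ∀ p : Nat.Primes, ((p : ℕ) : ℂ) ^ (-(s : ℂ)) = ((x p : ℝ) : ℂ) := by
    intro p
    rw [show (-(s:ℂ)) = -((s:ℕ):ℂ) from rfl, cpow_neg, Complex.cpow_natCast]
    push_cast [hxdef]
    ring
  have key : ∀ p : Nat.Primes,
      -Complex.log (1 - χ ((p : ℕ) : ZMod N) * ((p : ℕ) : ℂ) ^ (-(s : ℂ)))
        = ((-Real.log (1 - c p * x p) : ℝ) : ℂ) := by
    intro p
    rw [hχp, hpx, ← Complex.ofReal_mul, ← Complex.ofReal_one, ← Complex.ofReal_sub,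
      ← Complex.ofReal_log (hpos p).le, Complex.ofReal_neg]
  have keyz : ∀ p : Nat.Primes,
      -Complex.log (1 - ((p : ℕ) : ℂ) ^ (-(s : ℂ)))
        = ((-Real.log (1 - x p) : ℝ) : ℂ) := by
    intro p
    rw [hpx, ← Complex.ofReal_one, ← Complex.ofReal_sub,
      ← Complex.ofReal_log (by nlinarith [hx1 p]), Complex.ofReal_neg]
  -- summability
  have hsumC : Summable fun p : Nat.Primes =>
      -Complex.log (1 - χ ((p : ℕ) : ZMod N) * ((p : ℕ) : ℂ) ^ (-(s : ℂ))) := by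
    have h := (summable_dirichletSummand χ hs1).of_norm
    exact ((h.clog_one_sub).neg).subtype _
  have hsumZ : Summable fun p : Nat.Primes =>
      -Complex.log (1 - ((p : ℕ) : ℂ) ^ (-(s : ℂ))) := by
    have h := (summable_riemannZetaSummand hs1).of_norm
    exact ((h.clog_one_sub).neg).subtype _

  -- real summability
  set a : Nat.Primes → ℝ := fun p => -Real.log (1 - c p * x p) with ha
  set b : Nat.Primes → ℝ := fun p => -Real.log (1 - x p) with hb
  have hsumA : Summable a := by
    rw [← Complex.summable_ofReal]
    exact hsumC.congr key
  have hsumB : Summable b := by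
    rw [← Complex.summable_ofReal]
    exact hsumZ.congr keyz
  -- termwise bounds
  have hub : ∀ p, a p ≤ b p := by
    intro p
    have h1 : 1 - x p ≤ 1 - c p * x p := by nlinarith [le_abs_self (c p), hc1 p, hx0 p]
    have := Real.log_le_log (by nlinarith [hx1 p]) h1
    simp only [ha, hb]; linarith
  have hlb : ∀ p, -b p ≤ a p := by
    intro p
    have hx1p := hx1 p
    have hx0p := hx0 p
    have h1 : 1 - c p * x p ≤ (1 - x p)⁻¹ := by
      rw [inv_eq_one_div, le_div_iff₀ (by linarith : (0:ℝ) < 1 - x p)]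
      have hcm : (-1:ℝ) ≤ c p := by have := neg_abs_le (c p); linarith [hc1 p]
      nlinarith [mul_nonneg (by linarith : (0:ℝ) ≤ c p + 1)
        (mul_nonneg hx0p.le (by linarith : (0:ℝ) ≤ 1 - x p))]
    have h2 := Real.log_le_log (hpos p) h1
    rw [Real.log_inv] at h2
    simp only [ha, hb]; linarith
  set A : ℝ := ∑' p, a p with hA
  set B : ℝ := ∑' p, b p with hB
  have hAB : A ≤ B := Summable.tsum_le_tsum hub hsumA hsumB
  have hBA : -B ≤ A := by
    have := Summable.tsum_le_tsum hlb hsumB.neg hsumA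
    rwa [tsum_neg] at this
  -- identify L and ζ with real exponentials
  have hL : LSeries (fun n : ℕ => χ (n : ZMod N)) (s : ℂ) = ((Real.exp A : ℝ) : ℂ) := by
    rw [← DirichletCharacter.LSeries_eulerProduct_exp_log χ hs1]
    rw [show (∑' p : Nat.Primes, -Complex.log (1 - χ ((p : ℕ) : ZMod N) * ((p:ℕ):ℂ) ^ (-(s:ℂ))))
        = ((A : ℝ) : ℂ) by rw [hA, Complex.ofReal_tsum]; exact tsum_congr key]
    rw [Complex.ofReal_exp]
  have hZ : riemannZeta (s : ℂ) = ((Real.exp B : ℝ) : ℂ) := by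
    rw [← riemannZeta_eulerProduct_exp_log hs1]
    rw [show (∑' p : Nat.Primes, -Complex.log (1 - ((p:ℕ):ℂ) ^ (-(s:ℂ))))
        = ((B : ℝ) : ℂ) by rw [hB, Complex.ofReal_tsum]; exact tsum_congr keyz]
    rw [Complex.ofReal_exp]
  rw [hL, hZ]
  simp only [Complex.ofReal_re, Complex.ofReal_im]
  refine ⟨trivial, ?_, Real.exp_le_exp.mpr hAB⟩
  rw [← Real.exp_neg]
  exact Real.exp_le_exp.mpr hBA
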